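/- arXiv:2401.01030 — 5 statements merged into one kernel-verified Lean document; each statement's English description precedes it below -/
import Mathlib

section
/- Let s, t, n_1, …, n_t be positive integers with t ≥ 2 and n_1 ≤ n_2 ≤ ⋯ ≤ n_t, and let G = K_s ∨ (K_{n_1} ∪ K_{n_2} ∪ ⋯ ∪ K_{n_t}). Let x be a positive eigenvector of the adjacency matrix of G corresponding to the spectral radius ρ(G). Then for any indices 1 ≤ i ≤ j ≤ t, any vertex u of the i-th inner copy K_{n_i}, and any vertex v of the j-th inner copy K_{n_j}, one has x_u ≤ x_v. -/
/-- Adjacency matrix over ℝ (with classical decidability of adjacency). -/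
noncomputable def adjMat {V : Type*} [Fintype V] [DecidableEq V] (G : SimpleGraph V) :
    Matrix V V ℝ :=
  letI := Classical.decRel G.Adj
  G.adjMatrix ℝ

/-- Degree diagonal matrix over ℝ. -/
noncomputable def degMat {V : Type*} [Fintype V] [DecidableEq V] (G : SimpleGraph V) :
    Matrix V V ℝ :=
  letI := Classical.decRel G.Adj
  Matrix.diagonal fun v => (G.degree v : ℝ)

/-- The spectral radius of a graph: the largest eigenvalue of its adjacency matrix. -/
noncomputable def grho {V : Type*} [Fintype V] [DecidableEq V] (G : SimpleGraph V) : ℝ :=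
  sSup (spectrum ℝ (adjMat G))

/-- The signless Laplacian spectral radius of a graph: the largest eigenvalue of D(G) + A(G). -/
noncomputable def gq {V : Type*} [Fintype V] [DecidableEq V] (G : SimpleGraph V) : ℝ :=
  sSup (spectrum ℝ (degMat G + adjMat G))

/-- The graph `K_s ∨ (m K_r ∪ K_{n - s - m*r})` on `Fin n`:
vertices `< s` form the out clique joined to everything, the next `m*r` vertices form
`m` disjoint copies of `K_r`, and the remaining vertices form a clique. -/
def Hgen (n s m r : ℕ) : SimpleGraph (Fin n) where
  Adj u v := u ≠ v ∧ ((u : ℕ) < s ∨ (v : ℕ) < s ∨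
    (s + m * r ≤ (u : ℕ) ∧ s + m * r ≤ (v : ℕ)) ∨
    (s ≤ (u : ℕ) ∧ s ≤ (v : ℕ) ∧ (u : ℕ) < s + m * r ∧ (v : ℕ) < s + m * r ∧
      ((u : ℕ) - s) / r = ((v : ℕ) - s) / r))
  symm := by
    constructor
    rintro u v ⟨h1, h2⟩
    refine ⟨h1.symm, ?_⟩
    rcases h2 with h | h | ⟨h, h'⟩ | ⟨h1', h2', h3', h4', h5'⟩
    · exact Or.inr (Or.inl h)
    · exact Or.inl h
    · exact Or.inr (Or.inr (Or.inl ⟨h', h⟩))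
    · exact Or.inr (Or.inr (Or.inr ⟨h2', h1', h4', h3', h5'.symm⟩))
  loopless := by constructor; rintro u ⟨h1, -⟩; exact h1 rfl

/-- `K_δ ∨ ((δ-k+1) K_1 ∪ K_{n-2δ+k-1})`. -/
def Hndk (n δ k : ℕ) : SimpleGraph (Fin n) := Hgen n δ (δ - k + 1) 1

/-- A graph is `k`-factor-critical if deleting any `k` vertices leaves a graph
with a perfect matching. -/
def kFactorCritical {V : Type*} [Fintype V] (G : SimpleGraph V) (k : ℕ) : Prop :=
  ∀ S : Finset V, S.card = k →
    ∃ M : (G.induce ((S : Set V)ᶜ)).Subgraph, M.IsPerfectMatching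


/-- The graph `K_s ∨ (K_{n_1} ∪ ⋯ ∪ K_{n_t})`: the vertices `Sum.inl a` form the out copy
`K_s` joined to everything, and for each `i : Fin t` the vertices `Sum.inr ⟨i, _⟩` form the
`i`-th inner copy `K_{n_i}`. -/
def outerInner (s t : ℕ) (nn : Fin t → ℕ) :
    SimpleGraph (Fin s ⊕ Σ i : Fin t, Fin (nn i)) where
  Adj u v := u ≠ v ∧ (u.isLeft = true ∨ v.isLeft = true ∨
    ∃ (i : Fin t) (a b : Fin (nn i)), u = Sum.inr ⟨i, a⟩ ∧ v = Sum.inr ⟨i, b⟩)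
  symm := by
    constructor
    rintro u v ⟨h1, h2⟩
    refine ⟨h1.symm, ?_⟩
    rcases h2 with h | h | ⟨i, a, b, rfl, rfl⟩
    · exact Or.inr (Or.inl h)
    · exact Or.inl h
    · exact Or.inr (Or.inr ⟨i, b, a, rfl, rfl⟩)
  loopless := by constructor; rintro u ⟨h1, -⟩; exact h1 rfl

/-- Lemma 2.4 (adjacency case): the Perron vector entries are monotone over the inner copies. -/
theorem stmt_2 (s t : ℕ) (hs : 1 ≤ s) (ht : 2 ≤ t) (nn : Fin t → ℕ)
    (hpos : ∀ i : Fin t, 1 ≤ nn i) (hmono : Monotone nn)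
    (x : (Fin s ⊕ Σ i : Fin t, Fin (nn i)) → ℝ)
    (hx : ∀ v, 0 < x v)
    (heig : (adjMat (outerInner s t nn)).mulVec x = grho (outerInner s t nn) • x) :
    ∀ (i j : Fin t), i ≤ j → ∀ (a : Fin (nn i)) (b : Fin (nn j)),
      x (Sum.inr ⟨i, a⟩) ≤ x (Sum.inr ⟨j, b⟩) := by

  classical
  set G := outerInner s t nn with hG
  set ρ := grho G with hρ
  set S := ∑ b : Fin s, x (Sum.inl b) with hS
  have hSpos : 0 < S := by
    apply Finset.sum_pos (fun b _ => hx _)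
    exact ⟨⟨0, hs⟩, Finset.mem_univ _⟩
  -- eigen equation at inner vertices
  have key : ∀ (i : Fin t) (a : Fin (nn i)),
      ρ * x (Sum.inr ⟨i,a⟩) + x (Sum.inr ⟨i,a⟩)
        = S + ∑ c : Fin (nn i), x (Sum.inr ⟨i,c⟩) := by
    intro i a
    have h1 := congrFun heig (Sum.inr ⟨i,a⟩)
    have hmv : (adjMat G).mulVec x (Sum.inr ⟨i,a⟩)
        = ∑ v, (if G.Adj (Sum.inr ⟨i,a⟩) v then x v else 0) := by
      simp [adjMat, Matrix.mulVec, dotProduct, SimpleGraph.adjMatrix,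
        Matrix.of_apply, ite_mul]
    rw [hmv] at h1
    rw [Fintype.sum_sum_type] at h1
    have hleft : (∑ b : Fin s, (if G.Adj (Sum.inr ⟨i,a⟩) (Sum.inl b) then
        x (Sum.inl b) else 0)) = S := by
      apply Finset.sum_congr rfl
      intro b _
      rw [if_pos]
      exact ⟨by simp, Or.inr (Or.inl rfl)⟩
    rw [hleft] at h1
    have hright : (∑ p : Σ j : Fin t, Fin (nn j),
        (if G.Adj (Sum.inr ⟨i,a⟩) (Sum.inr p) then x (Sum.inr p) else 0))
        = (∑ c : Fin (nn i), x (Sum.inr ⟨i,c⟩)) - x (Sum.inr ⟨i,a⟩) := by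
      rw [← Finset.univ_sigma_univ, Finset.sum_sigma]
      rw [Finset.sum_eq_single i]
      · have hadj : ∀ c : Fin (nn i),
            G.Adj (Sum.inr ⟨i,a⟩) (Sum.inr ⟨i,c⟩) ↔ c ≠ a := by
          intro c
          constructor
          · rintro ⟨hne, -⟩ rfl
            exact hne rfl
          · intro hca
            refine ⟨?_, Or.inr (Or.inr ⟨i, a, c, rfl, rfl⟩)⟩
            intro h
            apply hca
            have := Sum.inr.inj h
            exact (Sigma.mk.inj_iff.mp this).2.symm.eq.symm ▸ rfl
        have step : ∀ c : Fin (nn i),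
            (if G.Adj (Sum.inr ⟨i,a⟩) (Sum.inr ⟨i,c⟩) then x (Sum.inr ⟨i,c⟩) else 0)
            = x (Sum.inr ⟨i,c⟩) - (if c = a then x (Sum.inr ⟨i,c⟩) else 0) := by
          intro c
          by_cases hc : c = a
          · simp [hc, hadj]
          · simp [hc, (hadj c).mpr hc]
        rw [Finset.sum_congr rfl (fun c _ => step c), Finset.sum_sub_distrib]
        congr 1
        simp
      · intro j _ hji
        apply Finset.sum_eq_zero
        intro c _
        rw [if_neg]
        rintro ⟨-, h | h | ⟨i', a', b', h1', h2'⟩⟩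
        · simp at h
        · simp at h
        · have e1 : i = i' := congrArg Sigma.fst (Sum.inr.inj h1')
          have e2 : j = i' := congrArg Sigma.fst (Sum.inr.inj h2')
          exact hji (e2.trans e1.symm)
      · intro h; exact absurd (Finset.mem_univ i) h
    rw [hright] at h1
    simp only [Pi.smul_apply, smul_eq_mul] at h1
    linarith [h1]
  -- ρ > 0
  have hρpos : 0 < ρ := by
    have i0 : Fin t := ⟨0, by omega⟩
    have a0 : Fin (nn i0) := ⟨0, hpos i0⟩
    have hk := key i0 a0
    have hT : x (Sum.inr ⟨i0, a0⟩) ≤ ∑ c : Fin (nn i0), x (Sum.inr ⟨i0, c⟩) :=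
      Finset.single_le_sum (f := fun c => x (Sum.inr ⟨i0, c⟩)) (fun c _ => (hx _).le) (Finset.mem_univ a0)
    have hy := hx (Sum.inr ⟨i0, a0⟩)
    nlinarith
  -- entries within a copy are equal
  have hconst : ∀ (i : Fin t) (a b : Fin (nn i)),
      x (Sum.inr ⟨i,a⟩) = x (Sum.inr ⟨i,b⟩) := by
    intro i a b
    have ha := key i a
    have hb := key i b
    have : (ρ + 1) * x (Sum.inr ⟨i,a⟩) = (ρ + 1) * x (Sum.inr ⟨i,b⟩) := by ring_nf; linarith
    exact mul_left_cancel₀ (by linarith) this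
  -- key equation in closed form
  have key2 : ∀ (i : Fin t) (a : Fin (nn i)),
      (ρ + 1 - (nn i : ℝ)) * x (Sum.inr ⟨i,a⟩) = S := by
    intro i a
    have hk := key i a
    have hT : (∑ c : Fin (nn i), x (Sum.inr ⟨i,c⟩))
        = (nn i : ℝ) * x (Sum.inr ⟨i,a⟩) := by
      rw [Finset.sum_congr rfl (fun c _ => (hconst i c a))]
      simp [mul_comm]
    rw [hT] at hk
    ring_nf
    ring_nf at hk
    linarith
  intro i j hij a b
  have h1 := key2 i a
  have h2 := key2 j b
  have hy := hx (Sum.inr ⟨i,a⟩)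
  have hz := hx (Sum.inr ⟨j,b⟩)
  have hdi : 0 < ρ + 1 - (nn i : ℝ) := by nlinarith
  have hdj : 0 < ρ + 1 - (nn j : ℝ) := by nlinarith
  have hc : (nn i : ℝ) ≤ (nn j : ℝ) := by exact_mod_cast hmono hij
  nlinarith
end

section
/- Let s, t, n_1, …, n_t be positive integers with t ≥ 2 and n_1 ≤ n_2 ≤ ⋯ ≤ n_t, and let G = K_s ∨ (K_{n_1} ∪ K_{n_2} ∪ ⋯ ∪ K_{n_t}). Let y be a positive eigenvector of the signless Laplacian matrix Q(G) = D(G) + A(G) corresponding to the signless Laplacian spectral radius q(G). Then for any indices 1 ≤ i ≤ j ≤ t, any vertex u of the i-th inner copy K_{n_i}, and any vertex v of the j-th inner copy K_{n_j}, one has y_u ≤ y_v. -/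
/-- Lemma 2.4 (signless Laplacian case): the Perron vector entries are monotone over the
inner copies. -/
theorem stmt_3 (s t : ℕ) (hs : 1 ≤ s) (ht : 2 ≤ t) (nn : Fin t → ℕ)
    (hpos : ∀ i : Fin t, 1 ≤ nn i) (hmono : Monotone nn)
    (y : (Fin s ⊕ Σ i : Fin t, Fin (nn i)) → ℝ)
    (hy : ∀ v, 0 < y v)
    (heig : (degMat (outerInner s t nn) + adjMat (outerInner s t nn)).mulVec y
      = gq (outerInner s t nn) • y) :
    ∀ (i j : Fin t), i ≤ j → ∀ (a : Fin (nn i)) (b : Fin (nn j)),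
      y (Sum.inr ⟨i, a⟩) ≤ y (Sum.inr ⟨j, b⟩) := by
  classical
  intro i j hij a b
  set G := outerInner s t nn with hGdef
  letI : DecidableRel G.Adj := Classical.decRel G.Adj
  set q := gq G with hq
  have hAM : adjMat G = G.adjMatrix ℝ := rfl
  have hDM : degMat G = Matrix.diagonal (fun v => (G.degree v : ℝ)) := rfl
  set Sout : ℝ := ∑ c : Fin s, y (Sum.inl c) with hSoutdef
  have hSoutpos : 0 < Sout := by
    apply Finset.sum_pos (fun c _ => hy _)
    simpa [Finset.univ_nonempty_iff] using Fin.pos_iff_nonempty.mp hs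
  -- adjacency facts
  have hadj_out : ∀ (k : Fin t) (x : Fin (nn k)) (c : Fin s),
      G.Adj (Sum.inr ⟨k, x⟩) (Sum.inl c) := by
    intro k x c
    exact ⟨by simp, Or.inr (Or.inl rfl)⟩
  have hadj_same : ∀ (k : Fin t) (x x' : Fin (nn k)),
      G.Adj (Sum.inr ⟨k, x⟩) (Sum.inr ⟨k, x'⟩) ↔ ¬ x' = x := by
    intro k x x'
    constructor
    · rintro ⟨hne, -⟩ rfl; exact hne rfl
    · intro h
      refine ⟨fun he => h ?_, Or.inr (Or.inr ⟨k, x, x', rfl, rfl⟩)⟩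
      obtain ⟨-, h2⟩ : k = k ∧ HEq x x' := by simpa [Sigma.ext_iff] using he
      exact (eq_of_heq h2).symm
  have hadj_cross : ∀ (k l : Fin t) (x : Fin (nn k)) (x' : Fin (nn l)), l ≠ k →
      ¬ G.Adj (Sum.inr ⟨k, x⟩) (Sum.inr ⟨l, x'⟩) := by
    rintro k l x x' hlk ⟨-, h⟩
    simp only [Sum.isLeft_inr] at h
    rcases h with h | h | ⟨m, u1, u2, h1, h2⟩
    · exact absurd h (by simp)
    · exact absurd h (by simp)
    · obtain ⟨rfl, -⟩ : k = m ∧ HEq x u1 := by simpa [Sigma.ext_iff] using h1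
      obtain ⟨rfl, -⟩ : l = k ∧ HEq x' u2 := by simpa [Sigma.ext_iff] using h2
      exact hlk rfl
  -- generic neighbor sum
  have hsum : ∀ (f : (Fin s ⊕ Σ i : Fin t, Fin (nn i)) → ℝ) (k : Fin t) (x : Fin (nn k)),
      (∑ v, if G.Adj (Sum.inr ⟨k, x⟩) v then f v else 0)
        = (∑ c : Fin s, f (Sum.inl c))
          + ((∑ x' : Fin (nn k), f (Sum.inr ⟨k, x'⟩)) - f (Sum.inr ⟨k, x⟩)) := by
    intro f k x
    rw [Fintype.sum_sum_type]
    congr 1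
    · exact Finset.sum_congr rfl fun c _ => if_pos (hadj_out k x c)
    · rw [← Finset.univ_sigma_univ, Finset.sum_sigma]
      rw [Finset.sum_eq_single k]
      · have : ∀ x' : Fin (nn k),
            (if G.Adj (Sum.inr ⟨k, x⟩) (Sum.inr ⟨k, x'⟩) then f (Sum.inr ⟨k, x'⟩) else 0)
              = f (Sum.inr ⟨k, x'⟩) - (if x' = x then f (Sum.inr ⟨k, x'⟩) else 0) := by
          intro x'
          by_cases h : x' = x
          · simp [h, hadj_same]
          · simp [h, hadj_same]
        rw [Finset.sum_congr rfl fun x' _ => this x', Finset.sum_sub_distrib,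
          Finset.sum_ite_eq' Finset.univ x (fun x' => f (Sum.inr ⟨k, x'⟩))]
        simp
      · intro l _ hlk
        exact Finset.sum_eq_zero fun x' _ => if_neg (hadj_cross k l x x' hlk)
      · intro h; exact absurd (Finset.mem_univ k) h
  -- degree of an inner vertex
  have hdeg : ∀ (k : Fin t) (x : Fin (nn k)),
      (G.degree (Sum.inr ⟨k, x⟩) : ℝ) = (s : ℝ) + ((nn k : ℝ) - 1) := by
    intro k x
    have h1 : (G.degree (Sum.inr ⟨k, x⟩) : ℝ)
        = ∑ v, if G.Adj (Sum.inr ⟨k, x⟩) v then (1 : ℝ) else 0 := by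
      rw [SimpleGraph.degree, SimpleGraph.neighborFinset_eq_filter, Finset.card_filter]
      push_cast
      rfl
    rw [h1, hsum (fun _ => (1:ℝ)) k x]
    simp
  set Sk : ∀ k : Fin t, ℝ := fun k => ∑ x' : Fin (nn k), y (Sum.inr ⟨k, x'⟩) with hSkdef
  have hSkpos : ∀ k, 0 < Sk k := by
    intro k
    apply Finset.sum_pos (fun x _ => hy _)
    simpa [Finset.univ_nonempty_iff] using Fin.pos_iff_nonempty.mp (hpos k)
  -- the eigenvalue row equation at inner vertices
  have hrow : ∀ (k : Fin t) (x : Fin (nn k)),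
      (q - (s : ℝ) - (nn k : ℝ) + 2) * y (Sum.inr ⟨k, x⟩) = Sk k + Sout := by
    intro k x
    have h1 := congrFun heig (Sum.inr ⟨k, x⟩)
    rw [Matrix.add_mulVec] at h1
    have h2 : ((degMat G).mulVec y + (adjMat G).mulVec y) (Sum.inr ⟨k, x⟩)
        = (G.degree (Sum.inr ⟨k, x⟩) : ℝ) * y (Sum.inr ⟨k, x⟩)
          + ∑ v, if G.Adj (Sum.inr ⟨k, x⟩) v then y v else 0 := by
      rw [Pi.add_apply, hDM, Matrix.mulVec_diagonal, hAM,
        SimpleGraph.adjMatrix_mulVec_apply, SimpleGraph.neighborFinset_eq_filter,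
        Finset.sum_filter]
    rw [h2, hdeg k x, hsum y k x] at h1
    simp only [Pi.smul_apply, smul_eq_mul] at h1
    rw [← hSoutdef] at h1
    have hskk : (∑ x' : Fin (nn k), y (Sum.inr ⟨k, x'⟩)) = Sk k := rfl
    rw [hskk] at h1
    linear_combination -h1
  -- y is constant on each inner copy
  have hconst : ∀ (k : Fin t) (x x' : Fin (nn k)),
      y (Sum.inr ⟨k, x⟩) = y (Sum.inr ⟨k, x'⟩) := by
    intro k x x'
    have hc : 0 < q - (s : ℝ) - (nn k : ℝ) + 2 := by
      nlinarith [hrow k x, hy (Sum.inr ⟨k, x⟩), hSkpos k, hSoutpos]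
    have := (hrow k x).trans (hrow k x').symm
    exact mul_left_cancel₀ (ne_of_gt hc) this
  have hSk : ∀ (k : Fin t) (x : Fin (nn k)), Sk k = (nn k : ℝ) * y (Sum.inr ⟨k, x⟩) := by
    intro k x
    rw [hSkdef]
    simp only
    rw [Finset.sum_congr rfl fun x' _ => hconst k x' x]
    simp [mul_comm]
  have hkey : ∀ (k : Fin t) (x : Fin (nn k)),
      (q - (s : ℝ) - 2 * (nn k : ℝ) + 2) * y (Sum.inr ⟨k, x⟩) = Sout := by
    intro k x
    have h := hrow k x
    rw [hSk k x] at h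
    linear_combination h
  have hcpos : ∀ (k : Fin t) (x : Fin (nn k)), 0 < q - (s : ℝ) - 2 * (nn k : ℝ) + 2 := by
    intro k x
    nlinarith [hkey k x, hy (Sum.inr ⟨k, x⟩), hSoutpos]
  have hnle : (nn i : ℝ) ≤ (nn j : ℝ) := Nat.cast_le.mpr (hmono hij)
  nlinarith [hkey i a, hkey j b, hcpos j b, hy (Sum.inr ⟨i, a⟩), hy (Sum.inr ⟨j, b⟩),
    mul_nonneg (by linarith : (0:ℝ) ≤ 2 * ((nn j : ℝ) - (nn i : ℝ))) (hy (Sum.inr ⟨i, a⟩)).le]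
end

section
/- Let δ, k, n be integers with δ ≥ 1, 0 ≤ k < δ, and n > 2δ−k+1. Then ρ(H(n,δ,k)) is equal to the largest real root of f(x) = 0, where f(x) = x³ − (n+k−δ−3)x² − (n+δ²−kδ+k−2)x − 2δ³ + (n+3k−4)δ² + (n+3k−nk−k²−2)δ and H(n,δ,k) = K_δ ∨ ((δ−k+1)K_1 ∪ K_{n−2δ+k−1}). -/
open Matrix Finset

lemma mem_spectrum_of_eigen {N : ℕ} (M : Matrix (Fin N) (Fin N) ℝ) {x : ℝ} {v : Fin N → ℝ}
    (hv : v ≠ 0) (h : M *ᵥ v = x • v) : x ∈ spectrum ℝ M := by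
  rw [spectrum.mem_iff]
  intro hu
  rw [Matrix.isUnit_iff_isUnit_det, isUnit_iff_ne_zero] at hu
  apply hu
  rw [← Matrix.exists_mulVec_eq_zero_iff]
  refine ⟨v, hv, ?_⟩
  rw [Matrix.sub_mulVec, h, Algebra.algebraMap_eq_smul_one, Matrix.smul_mulVec,
    Matrix.one_mulVec, sub_self]

lemma eigen_of_mem_spectrum {N : ℕ} (M : Matrix (Fin N) (Fin N) ℝ) {x : ℝ}
    (h : x ∈ spectrum ℝ M) : ∃ v : Fin N → ℝ, v ≠ 0 ∧ M *ᵥ v = x • v := by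
  rw [spectrum.mem_iff, Matrix.isUnit_iff_isUnit_det, isUnit_iff_ne_zero, not_not,
    ← Matrix.exists_mulVec_eq_zero_iff] at h
  obtain ⟨v, hv, hmv⟩ := h
  refine ⟨v, hv, ?_⟩
  rw [Matrix.sub_mulVec, Algebra.algebraMap_eq_smul_one, Matrix.smul_mulVec,
    Matrix.one_mulVec, sub_eq_zero] at hmv
  exact hmv.symm

lemma fin_sum_eq (n : ℕ) (v : Fin n → ℝ) (f : ℕ → ℝ) (hf : ∀ w : Fin n, v w = f (w : ℕ)) :
    ∑ w : Fin n, v w = ∑ i ∈ Finset.range n, f i := by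
  rw [Finset.sum_congr rfl (fun w _ => hf w)]
  exact Fin.sum_univ_eq_sum_range f n

lemma sum_Ico_piece (a b : ℕ) (f : ℕ → ℝ) (c : ℝ) (hc : ∀ i, a ≤ i → i < b → f i = c) :
    ∑ i ∈ Finset.Ico a b, f i = ((b - a : ℕ) : ℝ) * c := by
  rw [Finset.sum_congr rfl (fun i hi => hc i (Finset.mem_Ico.1 hi).1 (Finset.mem_Ico.1 hi).2),
    Finset.sum_const, Nat.card_Ico, nsmul_eq_mul]

lemma sum_range_split (s t n : ℕ) (h1 : s ≤ t) (h2 : t ≤ n) (f : ℕ → ℝ) :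
    ∑ i ∈ Finset.range n, f i =
      (∑ i ∈ Finset.Ico 0 s, f i) + (∑ i ∈ Finset.Ico s t, f i) + ∑ i ∈ Finset.Ico t n, f i := by
  rw [Finset.range_eq_Ico, ← Finset.sum_Ico_consecutive f (Nat.zero_le t) h2,
    ← Finset.sum_Ico_consecutive f (Nat.zero_le s) h1]

lemma sums_piecewise (n s t : ℕ) (hst : s ≤ t) (htn : t ≤ n) (v : Fin n → ℝ) (α β γ : ℝ)
    (hv : ∀ w : Fin n, v w = if (w : ℕ) < s then α else if (w : ℕ) < t then β else γ) :
    (∑ w, v w) = (s : ℝ) * α + ((t - s : ℕ) : ℝ) * β + ((n - t : ℕ) : ℝ) * γ ∧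
    (∑ w ∈ Finset.univ.filter (fun w : Fin n => (w : ℕ) < s), v w) = (s : ℝ) * α ∧
    (∑ w ∈ Finset.univ.filter (fun w : Fin n => t ≤ (w : ℕ)), v w) = ((n - t : ℕ) : ℝ) * γ := by
  set f : ℕ → ℝ := fun i => if i < s then α else if i < t then β else γ with hf
  refine ⟨?_, ?_, ?_⟩
  · rw [fin_sum_eq n v f (fun w => hv w), sum_range_split s t n hst htn,
      sum_Ico_piece 0 s f α (fun i _ hi => by simp only [hf, if_pos hi]),
      sum_Ico_piece s t f β (fun i hi hi' => by
        simp only [hf, if_neg (by omega : ¬ i < s), if_pos hi']),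
      sum_Ico_piece t n f γ (fun i hi _ => by
        simp only [hf, if_neg (by omega : ¬ i < s), if_neg (by omega : ¬ i < t)]),
      Nat.sub_zero]
  · rw [Finset.sum_filter,
      fin_sum_eq n _ (fun i => if i < s then f i else 0)
        (fun w => by by_cases h : (w : ℕ) < s <;> simp only [if_pos, if_neg, h, hv w, hf]),
      sum_range_split s t n hst htn,
      sum_Ico_piece 0 s _ α (fun i _ hi => by simp only [hf, if_pos hi]),
      sum_Ico_piece s t _ 0 (fun i hi _ => by simp only [if_neg (by omega : ¬ i < s)]),
      sum_Ico_piece t n _ 0 (fun i hi _ => by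
        simp only [if_neg (by omega : ¬ i < s)]),
      Nat.sub_zero]
    ring
  · rw [Finset.sum_filter,
      fin_sum_eq n _ (fun i => if t ≤ i then f i else 0)
        (fun w => by by_cases h : t ≤ (w : ℕ) <;> simp only [if_pos, if_neg, h, hv w, hf]),
      sum_range_split s t n hst htn,
      sum_Ico_piece 0 s _ 0 (fun i _ hi => by simp only [if_neg (by omega : ¬ t ≤ i)]),
      sum_Ico_piece s t _ 0 (fun i hi hi' => by simp only [if_neg (by omega : ¬ t ≤ i)]),
      sum_Ico_piece t n _ γ (fun i hi _ => by
        simp only [if_pos hi, hf, if_neg (by omega : ¬ i < s), if_neg (by omega : ¬ i < t)])]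
    ring

lemma hndk_adj (n δ k : ℕ) (u w : Fin n) :
    (Hndk n δ k).Adj u w ↔ (u : ℕ) ≠ (w : ℕ) ∧ ((u : ℕ) < δ ∨ (w : ℕ) < δ ∨
      (δ + (δ - k + 1) ≤ (u : ℕ) ∧ δ + (δ - k + 1) ≤ (w : ℕ))) := by
  show (u ≠ w ∧ _) ↔ _
  rw [Ne, Ne, Fin.ext_iff]
  simp only [mul_one, Nat.div_one]
  constructor
  · rintro ⟨h1, h2⟩; exact ⟨h1, by omega⟩
  · rintro ⟨h1, h2⟩; exact ⟨h1, by omega⟩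

lemma mulVec_hndk (n δ k : ℕ) (v : Fin n → ℝ) (u : Fin n) :
    (adjMat (Hndk n δ k) *ᵥ v) u =
      if (u : ℕ) < δ then (∑ w, v w) - v u
      else if (u : ℕ) < δ + (δ - k + 1) then
        ∑ w ∈ Finset.univ.filter (fun w : Fin n => (w : ℕ) < δ), v w
      else (∑ w ∈ Finset.univ.filter (fun w : Fin n => (w : ℕ) < δ), v w)
        + (∑ w ∈ Finset.univ.filter (fun w : Fin n => δ + (δ - k + 1) ≤ (w : ℕ)), v w) - v u := by
  letI : DecidableRel (Hndk n δ k).Adj := Classical.decRel _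
  show ((Hndk n δ k).adjMatrix ℝ *ᵥ v) u = _
  rw [SimpleGraph.adjMatrix_mulVec_apply, SimpleGraph.neighborFinset_eq_filter, Finset.sum_filter]
  by_cases h1 : (u : ℕ) < δ
  · rw [if_pos h1]
    have key : ∀ w : Fin n, (if (Hndk n δ k).Adj u w then v w else 0)
        = v w - (if w = u then v w else 0) := by
      intro w
      by_cases hw : w = u
      · subst hw
        rw [if_neg ((Hndk n δ k).loopless.irrefl w), if_pos rfl, sub_self]
      · rw [if_neg hw, if_pos, sub_zero]
        rw [hndk_adj]
        exact ⟨fun h => hw (Fin.ext h.symm), Or.inl h1⟩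
    rw [Finset.sum_congr rfl (fun w _ => key w), Finset.sum_sub_distrib,
      Finset.sum_ite_eq' Finset.univ u v, if_pos (Finset.mem_univ u)]
  · rw [if_neg h1]
    by_cases h2 : (u : ℕ) < δ + (δ - k + 1)
    · rw [if_pos h2, Finset.sum_filter]
      apply Finset.sum_congr rfl
      intro w _
      by_cases hw : (w : ℕ) < δ
      · rw [if_pos hw, if_pos]
        rw [hndk_adj]
        exact ⟨by omega, Or.inr (Or.inl hw)⟩
      · rw [if_neg hw, if_neg]
        rw [hndk_adj]
        omega
    · rw [if_neg h2]
      have key : ∀ w : Fin n, (if (Hndk n δ k).Adj u w then v w else 0)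
          = (if (w : ℕ) < δ then v w else 0) + (if δ + (δ - k + 1) ≤ (w : ℕ) then v w else 0)
            - (if w = u then v w else 0) := by
        intro w
        by_cases hw : w = u
        · subst hw
          rw [if_neg ((Hndk n δ k).loopless.irrefl w),
            if_neg (show ¬((w : ℕ) < δ) by omega),
            if_pos (show δ + (δ - k + 1) ≤ (w : ℕ) by omega), if_pos rfl, zero_add, sub_self]
        · have hvw : (u : ℕ) ≠ (w : ℕ) := fun h => hw (Fin.ext h.symm)
          rw [if_neg hw, sub_zero]
          by_cases hw1 : (w : ℕ) < δ
          · rw [if_pos hw1, if_neg (show ¬(δ + (δ - k + 1) ≤ (w : ℕ)) by omega), add_zero, if_pos]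
            rw [hndk_adj]
            exact ⟨hvw, Or.inr (Or.inl hw1)⟩
          · rw [if_neg hw1]
            by_cases hw2 : δ + (δ - k + 1) ≤ (w : ℕ)
            · rw [if_pos hw2, zero_add, if_pos]
              rw [hndk_adj]
              exact ⟨hvw, Or.inr (Or.inr ⟨by omega, hw2⟩)⟩
            · rw [if_neg hw2, add_zero, if_neg]
              rw [hndk_adj]
              omega
      rw [Finset.sum_congr rfl (fun w _ => key w), Finset.sum_sub_distrib, Finset.sum_add_distrib,
        Finset.sum_ite_eq' Finset.univ u v, if_pos (Finset.mem_univ u), ← Finset.sum_filter,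
        ← Finset.sum_filter]

lemma adjMat_hermitian {N : ℕ} (G : SimpleGraph (Fin N)) : (adjMat G).IsHermitian := by
  ext i j
  simp only [adjMat, Matrix.conjTranspose_apply, SimpleGraph.adjMatrix_apply, starRingEnd_apply,
    star_trivial]
  by_cases h : G.Adj i j
  · rw [if_pos h, if_pos (G.adj_symm h)]
  · rw [if_neg h, if_neg (fun h' => h (G.adj_symm h'))]

lemma csSup_spectrum_pos {N : ℕ} (M : Matrix (Fin N) (Fin N) ℝ) (hH : M.IsHermitian)
    (htr : M.trace = 0) (hM : M ≠ 0) (h0 : (0 : ℝ) ∈ spectrum ℝ M) :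
    0 < sSup (spectrum ℝ M) := by
  have hfin : (spectrum ℝ M).Finite := M.finite_spectrum
  have hbdd : BddAbove (spectrum ℝ M) := hfin.bddAbove
  by_contra hle
  push_neg at hle
  have heig : ∀ i, hH.eigenvalues i ≤ 0 :=
    fun i => le_trans (le_csSup hbdd (hH.eigenvalues_mem_spectrum_real i)) hle
  have hsum : ∑ i, hH.eigenvalues i = 0 := by
    have h1 : M.trace = ∑ i, hH.eigenvalues i := by
      conv_lhs => rw [hH.spectral_theorem]
      rw [Unitary.conjStarAlgAut_apply, Matrix.trace_mul_cycle,
        Matrix.mem_unitaryGroup_iff'.mp (hH.eigenvectorUnitary).2, Matrix.one_mul,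
        Matrix.trace_diagonal]
      simp [RCLike.ofReal_real_eq_id]
    rw [← h1, htr]
  have hz := (Finset.sum_eq_zero_iff_of_nonpos (fun i _ => heig i)).1 hsum
  apply hM
  rw [hH.spectral_theorem]
  have hd : Matrix.diagonal (RCLike.ofReal ∘ hH.eigenvalues) = (0 : Matrix (Fin N) (Fin N) ℝ) := by
    ext i j
    rcases eq_or_ne i j with rfl | hij
    · simp [hz i (Finset.mem_univ i)]
    · simp [Matrix.diagonal_apply_ne _ hij]
  rw [hd, map_zero]


/-- Lemma 3.2 (adjacency case): `ρ(H(n,δ,k))` is the largest real root of `f`. -/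
theorem stmt_6 (n δ k : ℕ) (hδ : 1 ≤ δ) (hk : k < δ) (hn : (2 * δ : ℤ) - k + 1 < n) :
    IsGreatest {x : ℝ | x ^ 3 - ((n : ℝ) + (k : ℝ) - (δ : ℝ) - 3) * x ^ 2 - ((n : ℝ) + (δ : ℝ) ^ 2 - (k : ℝ) * (δ : ℝ) + (k : ℝ) - 2) * x - 2 * (δ : ℝ) ^ 3 + ((n : ℝ) + 3 * (k : ℝ) - 4) * (δ : ℝ) ^ 2 + ((n : ℝ) + 3 * (k : ℝ) - (n : ℝ) * (k : ℝ) - (k : ℝ) ^ 2 - 2) * (δ : ℝ) = 0} (grho (Hndk n δ k)) := by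
  have htn : δ + (δ - k + 1) + 1 ≤ n := by omega
  have h0n : 0 < n := by omega
  have hδn : δ < n := by omega
  have htn' : δ + (δ - k + 1) < n := by omega
  have hδ1n : δ + 1 < n := by omega
  -- cast facts
  have hcast1 : ((δ + (δ - k + 1) - δ : ℕ) : ℝ) = (δ : ℝ) - (k : ℝ) + 1 := by
    have h : δ + (δ - k + 1) - δ = δ - k + 1 := by omega
    rw [h, Nat.cast_add, Nat.cast_sub hk.le, Nat.cast_one]
  have hcast2 : ((n - (δ + (δ - k + 1)) : ℕ) : ℝ)
      = (n : ℝ) - (2 * (δ : ℝ) - (k : ℝ) + 1) := by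
    rw [Nat.cast_sub (by omega), Nat.cast_add, Nat.cast_add, Nat.cast_sub hk.le, Nat.cast_one]
    ring
  have hcast2' : (1 : ℝ) ≤ ((n - (δ + (δ - k + 1)) : ℕ) : ℝ) := by
    have h : (1 : ℕ) ≤ n - (δ + (δ - k + 1)) := by omega
    exact_mod_cast h
  have hCpos : (0 : ℝ) < (n : ℝ) - (2 * (δ : ℝ) - (k : ℝ) + 1) := by
    rw [← hcast2]; linarith
  have hDpos : (0 : ℝ) < (δ : ℝ) := by exact_mod_cast hδ
  set M := adjMat (Hndk n δ k) with hM
  -- zero is an eigenvalue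
  have h0spec : (0 : ℝ) ∈ spectrum ℝ M := by
    set a : Fin n := ⟨δ, hδn⟩ with ha
    set b : Fin n := ⟨δ + 1, hδ1n⟩ with hb
    have hab : a ≠ b := by
      intro h
      have := congrArg Fin.val h
      simp [ha, hb] at this
    set v0 : Fin n → ℝ := fun w => (if w = a then (1 : ℝ) else 0) - (if w = b then 1 else 0)
      with hv0
    have hv0a : ∀ u : Fin n, (u : ℕ) ≠ δ → (u : ℕ) ≠ δ + 1 → v0 u = 0 := by
      intro u h1 h2
      have hua : u ≠ a := by intro h; apply h1; rw [h]
      have hub : u ≠ b := by intro h; apply h2; rw [h]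
      simp [hv0, if_neg hua, if_neg hub]
    have hv0ne : v0 ≠ 0 := by
      intro h
      have := congrFun h a
      simp [hv0, if_pos rfl, if_neg hab] at this
    apply mem_spectrum_of_eigen M hv0ne
    rw [zero_smul]
    funext u
    have hT : ∑ w, v0 w = 0 := by
      rw [hv0, Finset.sum_sub_distrib, Finset.sum_ite_eq' Finset.univ a (fun _ => (1 : ℝ)),
        Finset.sum_ite_eq' Finset.univ b (fun _ => (1 : ℝ)), if_pos (Finset.mem_univ a),
        if_pos (Finset.mem_univ b), sub_self]
    have hS : ∑ w ∈ Finset.univ.filter (fun w : Fin n => (w : ℕ) < δ), v0 w = 0 :=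
      Finset.sum_eq_zero (by
        intro w hw
        rw [Finset.mem_filter] at hw
        exact hv0a w (by omega) (by omega))
    have hC : ∑ w ∈ Finset.univ.filter
        (fun w : Fin n => δ + (δ - k + 1) ≤ (w : ℕ)), v0 w = 0 :=
      Finset.sum_eq_zero (by
        intro w hw
        rw [Finset.mem_filter] at hw
        exact hv0a w (by omega) (by omega))
    rw [mulVec_hndk, hT, hS, hC]
    by_cases h1 : (u : ℕ) < δ
    · rw [if_pos h1, hv0a u (by omega) (by omega), sub_zero, Pi.zero_apply]
    · rw [if_neg h1]
      by_cases h2 : (u : ℕ) < δ + (δ - k + 1)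
      · rw [if_pos h2, Pi.zero_apply]
      · rw [if_neg h2, hv0a u (by omega) (by omega), Pi.zero_apply, add_zero, sub_zero]
  have hfin : (spectrum ℝ M).Finite := M.finite_spectrum
  have hbdd : BddAbove (spectrum ℝ M) := hfin.bddAbove
  have hMne : M ≠ 0 := by
    intro h
    have h01 : (Hndk n δ k).Adj ⟨0, h0n⟩ ⟨δ, hδn⟩ := by
      rw [hndk_adj]
      exact ⟨Nat.ne_of_lt hδ, Or.inl hδ⟩
    have := congrFun (congrFun h ⟨0, h0n⟩) ⟨δ, hδn⟩
    rw [hM] at this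
    simp only [adjMat, SimpleGraph.adjMatrix_apply, Matrix.zero_apply] at this
    rw [if_pos h01] at this
    exact one_ne_zero this
  have htrace : M.trace = 0 := by
    letI : DecidableRel (Hndk n δ k).Adj := Classical.decRel _
    exact SimpleGraph.trace_adjMatrix ℝ (Hndk n δ k)
  have hpos : 0 < grho (Hndk n δ k) :=
    csSup_spectrum_pos M (adjMat_hermitian _) htrace hMne h0spec
  have hmem : grho (Hndk n δ k) ∈ spectrum ℝ M :=
    Set.Nonempty.csSup_mem ⟨0, h0spec⟩ hfin
  set lam := grho (Hndk n δ k) with hlamdef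
  have hlam0 : lam ≠ 0 := ne_of_gt hpos
  have hlam1 : lam + 1 ≠ 0 := ne_of_gt (by linarith : (0 : ℝ) < lam + 1)
  constructor
  · -- membership
    obtain ⟨v, hvne, hveq⟩ := eigen_of_mem_spectrum M hmem
    have hEntry : ∀ u : Fin n,
        (if (u : ℕ) < δ then (∑ w, v w) - v u
        else if (u : ℕ) < δ + (δ - k + 1) then
          ∑ w ∈ Finset.univ.filter (fun w : Fin n => (w : ℕ) < δ), v w
        else (∑ w ∈ Finset.univ.filter (fun w : Fin n => (w : ℕ) < δ), v w)
          + (∑ w ∈ Finset.univ.filter (fun w : Fin n => δ + (δ - k + 1) ≤ (w : ℕ)), v w) - v u)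
        = lam * v u := by
      intro u
      have h := congrFun hveq u
      rw [mulVec_hndk] at h
      rw [h, Pi.smul_apply, smul_eq_mul]
    have hA := hEntry ⟨0, h0n⟩
    rw [if_pos (show ((⟨0, h0n⟩ : Fin n) : ℕ) < δ from hδ)] at hA
    have hB := hEntry ⟨δ, hδn⟩
    rw [if_neg (show ¬(((⟨δ, hδn⟩ : Fin n) : ℕ) < δ) from lt_irrefl δ),
      if_pos (show ((⟨δ, hδn⟩ : Fin n) : ℕ) < δ + (δ - k + 1) from
        Nat.lt_add_of_pos_right (by omega))] at hB
    have hG := hEntry ⟨δ + (δ - k + 1), htn'⟩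
    rw [if_neg (show ¬(((⟨δ + (δ - k + 1), htn'⟩ : Fin n) : ℕ) < δ) from
        Nat.not_lt.mpr (Nat.le_add_right δ _)),
      if_neg (show ¬(((⟨δ + (δ - k + 1), htn'⟩ : Fin n) : ℕ) < δ + (δ - k + 1)) from
        lt_irrefl _)] at hG
    have hconst : ∀ u : Fin n, v u = if (u : ℕ) < δ then v ⟨0, h0n⟩
        else if (u : ℕ) < δ + (δ - k + 1) then v ⟨δ, hδn⟩ else v ⟨δ + (δ - k + 1), htn'⟩ := by
      intro u
      have h := hEntry u
      by_cases h1 : (u : ℕ) < δ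
      · rw [if_pos h1] at h ⊢
        exact mul_left_cancel₀ hlam1 (by linarith)
      · rw [if_neg h1] at h ⊢
        by_cases h2 : (u : ℕ) < δ + (δ - k + 1)
        · rw [if_pos h2] at h ⊢
          exact mul_left_cancel₀ hlam0 (by linarith)
        · rw [if_neg h2] at h ⊢
          exact mul_left_cancel₀ hlam1 (by linarith)
    obtain ⟨hT, hS, hC⟩ := sums_piecewise n δ (δ + (δ - k + 1)) (by omega) (by omega) v _ _ _
      hconst
    rw [hT, hcast1, hcast2] at hA
    rw [hS] at hB
    rw [hS, hC, hcast2] at hG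
    have hnz : v ⟨0, h0n⟩ ≠ 0 := by
      intro ha
      have hbz : v ⟨δ, hδn⟩ = 0 := by
        rw [ha, mul_zero] at hB
        exact (mul_eq_zero.1 hB.symm).resolve_left hlam0
      have hgz : v ⟨δ + (δ - k + 1), htn'⟩ = 0 := by
        rw [ha, hbz] at hA
        have hCg : ((n : ℝ) - (2 * (δ : ℝ) - (k : ℝ) + 1)) * v ⟨δ + (δ - k + 1), htn'⟩ = 0 := by
          linarith
        exact (mul_eq_zero.1 hCg).resolve_left (ne_of_gt hCpos)
      apply hvne
      funext u
      rw [hconst u]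
      split_ifs <;> simp [ha, hbz, hgz]
    have key : (lam ^ 3 - ((n : ℝ) + (k : ℝ) - (δ : ℝ) - 3) * lam ^ 2
        - ((n : ℝ) + (δ : ℝ) ^ 2 - (k : ℝ) * (δ : ℝ) + (k : ℝ) - 2) * lam
        - 2 * (δ : ℝ) ^ 3 + ((n : ℝ) + 3 * (k : ℝ) - 4) * (δ : ℝ) ^ 2
        + ((n : ℝ) + 3 * (k : ℝ) - (n : ℝ) * (k : ℝ) - (k : ℝ) ^ 2 - 2) * (δ : ℝ))
        * v ⟨0, h0n⟩ = 0 := by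
      linear_combination
        (-(lam * (lam - ((n : ℝ) - (2 * (δ : ℝ) - (k : ℝ) + 1)) + 1))) * hA
        + (-(((δ : ℝ) - (k : ℝ) + 1) * (lam - ((n : ℝ) - (2 * (δ : ℝ) - (k : ℝ) + 1)) + 1))) * hB
        + (-(((n : ℝ) - (2 * (δ : ℝ) - (k : ℝ) + 1)) * lam)) * hG
    show _ = 0
    exact (mul_eq_zero.1 key).resolve_right hnz
  · -- upper bound
    intro x hx
    simp only [Set.mem_setOf_eq] at hx
    by_cases hx0 : x = 0
    · rw [hx0]
      show (0 : ℝ) ≤ sSup (spectrum ℝ M)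
      exact le_csSup hbdd h0spec
    have hxC : x ≠ ((n : ℝ) - (2 * (δ : ℝ) - (k : ℝ) + 1)) - 1 := by
      intro hEq
      rw [hEq] at hx
      have h2 : ((n : ℝ) - (2 * (δ : ℝ) - (k : ℝ) + 1)) * (δ : ℝ)
          * (((n : ℝ) - (2 * (δ : ℝ) - (k : ℝ) + 1)) - 1) = 0 := by
        linear_combination -hx
      rcases mul_eq_zero.1 h2 with h3 | h3
      · rcases mul_eq_zero.1 h3 with h4 | h4
        · exact (ne_of_gt hCpos) h4
        · exact (ne_of_gt hDpos) h4
      · exact hx0 (by rw [hEq, h3])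
    have hxC' : x - (((n : ℝ) - (2 * (δ : ℝ) - (k : ℝ) + 1)) - 1) ≠ 0 := sub_ne_zero.mpr hxC
    set vv : Fin n → ℝ := fun w =>
      if (w : ℕ) < δ then x * (x - (((n : ℝ) - (2 * (δ : ℝ) - (k : ℝ) + 1)) - 1))
      else if (w : ℕ) < δ + (δ - k + 1) then
        (δ : ℝ) * (x - (((n : ℝ) - (2 * (δ : ℝ) - (k : ℝ) + 1)) - 1))
      else (δ : ℝ) * x with hvv
    obtain ⟨hT, hS, hC⟩ := sums_piecewise n δ (δ + (δ - k + 1)) (by omega) (by omega) vv _ _ _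
      (fun w => rfl)
    rw [hcast1, hcast2] at hT
    rw [hcast2] at hC
    have hvvne : vv ≠ 0 := by
      intro h
      have := congrFun h ⟨0, h0n⟩
      rw [hvv, Pi.zero_apply] at this
      simp only [if_pos (show ((⟨0, h0n⟩ : Fin n) : ℕ) < δ from hδ)] at this
      exact (mul_ne_zero hx0 hxC') this
    have heig : M *ᵥ vv = x • vv := by
      funext u
      rw [mulVec_hndk, hT, hS, hC, Pi.smul_apply, smul_eq_mul]
      by_cases h1 : (u : ℕ) < δ
      · rw [if_pos h1]
        have hvu : vv u = x * (x - (((n : ℝ) - (2 * (δ : ℝ) - (k : ℝ) + 1)) - 1)) := by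
          rw [hvv]; simp only [if_pos h1]
        rw [hvu]
        linear_combination -hx
      · rw [if_neg h1]
        by_cases h2 : (u : ℕ) < δ + (δ - k + 1)
        · rw [if_pos h2]
          have hvu : vv u = (δ : ℝ) * (x - (((n : ℝ) - (2 * (δ : ℝ) - (k : ℝ) + 1)) - 1)) := by
            rw [hvv]; simp only [if_neg h1, if_pos h2]
          rw [hvu]
          ring
        · rw [if_neg h2]
          have hvu : vv u = (δ : ℝ) * x := by
            rw [hvv]; simp only [if_neg h1, if_neg h2]
          rw [hvu]
          ring
    show x ≤ sSup (spectrum ℝ M)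
    exact le_csSup hbdd (mem_spectrum_of_eigen M hvvne heig)
end

section
/- Let s, k, n be integers with s ≥ 1, 0 ≤ k ≤ s, and n ≥ 2s−k+2. Then ρ(K_s ∨ ((s−k+1)K_1 ∪ K_{n−2s+k−1})) is equal to the largest real root of f_s(x) = 0, where f_s(x) = x³ − (n+k−s−3)x² − (n+s²−ks+k−2)x − 2s³ + (n+3k−4)s² + (n+3k−nk−k²−2)s. -/
section AuxLemmas
open Finset


lemma aux_card_filter_lt (n c : ℕ) (h : c ≤ n) :
    (Finset.univ.filter (fun y : Fin n => (y : ℕ) < c)).card = c := by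
  have hmem : ∀ m ∈ Finset.range c, m < n := fun m hm => lt_of_lt_of_le (mem_range.mp hm) h
  have : (Finset.univ.filter (fun y : Fin n => (y : ℕ) < c)) = (Finset.range c).attachFin hmem := by
    ext y; simp [Finset.mem_attachFin]
  rw [this, Finset.card_attachFin, Finset.card_range]

lemma aux_card_filter_mid (n c d : ℕ) (h : d ≤ n) :
    (Finset.univ.filter (fun y : Fin n => c ≤ (y : ℕ) ∧ (y : ℕ) < d)).card = d - c := by
  have hmem : ∀ m ∈ Finset.Ico c d, m < n := fun m hm => lt_of_lt_of_le (mem_Ico.mp hm).2 h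
  have : (Finset.univ.filter (fun y : Fin n => c ≤ (y : ℕ) ∧ (y : ℕ) < d))
      = (Finset.Ico c d).attachFin hmem := by
    ext y; simp [Finset.mem_attachFin]
  rw [this, Finset.card_attachFin, Nat.card_Ico]

lemma aux_card_filter_ge (n c : ℕ) :
    (Finset.univ.filter (fun y : Fin n => c ≤ (y : ℕ))).card = n - c := by
  have hmem : ∀ m ∈ Finset.Ico c n, m < n := fun m hm => (mem_Ico.mp hm).2
  have : (Finset.univ.filter (fun y : Fin n => c ≤ (y : ℕ)))
      = (Finset.Ico c n).attachFin hmem := by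
    ext y; simp [Finset.mem_attachFin, y.isLt]
  rw [this, Finset.card_attachFin, Nat.card_Ico]

lemma aux_mem_spectrum_iff {N : ℕ} (M : Matrix (Fin N) (Fin N) ℝ) (x : ℝ) :
    x ∈ spectrum ℝ M ↔ ∃ v, v ≠ 0 ∧ M.mulVec v = x • v := by
  rw [spectrum.mem_iff, Algebra.algebraMap_eq_smul_one,
    Matrix.isUnit_iff_isUnit_det, isUnit_iff_ne_zero, not_ne_iff,
    ← Matrix.exists_mulVec_eq_zero_iff]
  constructor
  · rintro ⟨v, hv0, hv⟩
    refine ⟨v, hv0, ?_⟩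
    have := hv
    rw [Matrix.sub_mulVec, Matrix.smul_mulVec, Matrix.one_mulVec, sub_eq_zero] at this
    exact this.symm
  · rintro ⟨v, hv0, hv⟩
    refine ⟨v, hv0, ?_⟩
    rw [Matrix.sub_mulVec, Matrix.smul_mulVec, Matrix.one_mulVec, hv, sub_self]

lemma adjMat_eq {V : Type*} [Fintype V] [DecidableEq V] (G : SimpleGraph V)
    [DecidableRel G.Adj] : adjMat G = G.adjMatrix ℝ := by
  unfold adjMat
  congr!

lemma aux_adj_iff (n s a : ℕ) (u v : Fin n) :
    (Hgen n s a 1).Adj u v ↔ u ≠ v ∧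
      ((u : ℕ) < s ∨ (v : ℕ) < s ∨ (s + a ≤ (u : ℕ) ∧ s + a ≤ (v : ℕ))) := by
  show (u ≠ v ∧ _) ↔ _
  simp only [mul_one, Nat.div_one]
  constructor
  · rintro ⟨h1, h2⟩
    refine ⟨h1, ?_⟩
    rcases h2 with h | h | h | ⟨hu, hv, hu2, hv2, he⟩
    · exact Or.inl h
    · exact Or.inr (Or.inl h)
    · exact Or.inr (Or.inr h)
    · exact absurd (Fin.ext (show (u:ℕ) = v by omega)) h1
  · rintro ⟨h1, h2⟩
    exact ⟨h1, by tauto⟩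

section mulvec

variable {n s a : ℕ} (w : Fin n → ℝ)

/-- sum of `w` over the first block -/
noncomputable def sumS (s : ℕ) (w : Fin n → ℝ) : ℝ :=
  ∑ y ∈ Finset.univ.filter (fun y : Fin n => (y : ℕ) < s), w y

/-- sum of `w` over the last block -/
noncomputable def sumC (c : ℕ) (w : Fin n → ℝ) : ℝ :=
  ∑ y ∈ Finset.univ.filter (fun y : Fin n => c ≤ (y : ℕ)), w y

/-- sum of `w` over the middle block -/
noncomputable def sumI (s c : ℕ) (w : Fin n → ℝ) : ℝ :=
  ∑ y ∈ Finset.univ.filter (fun y : Fin n => s ≤ (y : ℕ) ∧ (y : ℕ) < c), w y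

lemma aux_total (s c : ℕ) (hsc : s ≤ c) (w : Fin n → ℝ) :
    ∑ y, w y = sumS s w + sumI s c w + sumC c w := by
  classical
  have h1 : (Finset.univ.filter (fun y : Fin n => ¬ (y:ℕ) < s)).filter
        (fun y : Fin n => (y:ℕ) < c)
      = Finset.univ.filter (fun y : Fin n => s ≤ (y:ℕ) ∧ (y:ℕ) < c) := by
    rw [Finset.filter_filter]; ext y
    simp only [Finset.mem_filter, Finset.mem_univ, true_and, not_lt]
  have h2 : (Finset.univ.filter (fun y : Fin n => ¬ (y:ℕ) < s)).filter
        (fun y : Fin n => ¬ (y:ℕ) < c)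
      = Finset.univ.filter (fun y : Fin n => c ≤ (y:ℕ)) := by
    rw [Finset.filter_filter]; ext y
    simp only [Finset.mem_filter, Finset.mem_univ, true_and, not_lt]
    omega
  rw [← Finset.sum_filter_add_sum_filter_not Finset.univ (fun y : Fin n => (y:ℕ) < s) w,
      ← Finset.sum_filter_add_sum_filter_not
        (Finset.univ.filter (fun y : Fin n => ¬ (y:ℕ) < s)) (fun y : Fin n => (y:ℕ) < c) w,
      h1, h2, ← add_assoc]
  rfl

lemma aux_mulVec_S (u : Fin n) (hu : (u : ℕ) < s) :
    ((adjMat (Hgen n s a 1)).mulVec w) u = (∑ y, w y) - w u := by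
  classical
  rw [adjMat_eq, SimpleGraph.adjMatrix_mulVec_apply]
  have : (Hgen n s a 1).neighborFinset u = Finset.univ.erase u := by
    ext y
    rw [SimpleGraph.mem_neighborFinset, aux_adj_iff]
    simp only [Finset.mem_erase, Finset.mem_univ, and_true]
    constructor
    · rintro ⟨h1, -⟩; exact fun h => h1 h.symm
    · intro h; exact ⟨fun h' => h h'.symm, Or.inl hu⟩
  rw [this, Finset.sum_erase_eq_sub (Finset.mem_univ u)]

lemma aux_mulVec_I (u : Fin n) (hu : s ≤ (u : ℕ)) (hu2 : (u : ℕ) < s + a) :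
    ((adjMat (Hgen n s a 1)).mulVec w) u = sumS s w := by
  classical
  rw [adjMat_eq, SimpleGraph.adjMatrix_mulVec_apply]
  have : (Hgen n s a 1).neighborFinset u
      = Finset.univ.filter (fun y : Fin n => (y : ℕ) < s) := by
    ext y
    rw [SimpleGraph.mem_neighborFinset, aux_adj_iff]
    simp only [Finset.mem_filter, Finset.mem_univ, true_and]
    constructor
    · rintro ⟨h1, h | h | h⟩
      · omega
      · exact h
      · omega
    · intro h
      exact ⟨fun he => by rw [← he] at h; omega, Or.inr (Or.inl h)⟩
  rw [this]; rfl

lemma aux_mulVec_C (u : Fin n) (hu : s + a ≤ (u : ℕ)) :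
    ((adjMat (Hgen n s a 1)).mulVec w) u = sumS s w + sumC (s + a) w - w u := by
  classical
  classical
  rw [adjMat_eq, SimpleGraph.adjMatrix_mulVec_apply]
  have hset : (Hgen n s a 1).neighborFinset u
      = (Finset.univ.filter (fun y : Fin n => (y : ℕ) < s ∨ s + a ≤ (y : ℕ))).erase u := by
    ext y
    rw [SimpleGraph.mem_neighborFinset, aux_adj_iff]
    simp only [Finset.mem_erase, Finset.mem_filter, Finset.mem_univ, true_and]
    constructor
    · rintro ⟨h1, h | h | h⟩
      · omega
      · exact ⟨fun he => h1 he.symm, Or.inl h⟩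
      · exact ⟨fun he => h1 he.symm, Or.inr h.2⟩
    · rintro ⟨h1, h | h⟩
      · exact ⟨fun he => h1 he.symm, Or.inr (Or.inl h)⟩
      · exact ⟨fun he => h1 he.symm, Or.inr (Or.inr ⟨hu, h⟩)⟩
  have hmemu : u ∈ Finset.univ.filter (fun y : Fin n => (y : ℕ) < s ∨ s + a ≤ (y : ℕ)) := by
    simp only [Finset.mem_filter, Finset.mem_univ, true_and]
    exact Or.inr hu
  rw [hset, Finset.sum_erase_eq_sub hmemu]
  congr 1
  rw [Finset.filter_or, Finset.sum_union]
  · rfl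
  · rw [Finset.disjoint_left]
    intro y hy hy'
    simp only [Finset.mem_filter, Finset.mem_univ, true_and] at hy hy'
    omega

end mulvec


/-- The cubic from the statement. -/
def fpol (n k s : ℕ) (x : ℝ) : ℝ :=
  x ^ 3 - ((n : ℝ) + (k : ℝ) - (s : ℝ) - 3) * x ^ 2
    - ((n : ℝ) + (s : ℝ) ^ 2 - (k : ℝ) * (s : ℝ) + (k : ℝ) - 2) * x
    - 2 * (s : ℝ) ^ 3 + ((n : ℝ) + 3 * (k : ℝ) - 4) * (s : ℝ) ^ 2
    + ((n : ℝ) + 3 * (k : ℝ) - (n : ℝ) * (k : ℝ) - (k : ℝ) ^ 2 - 2) * (s : ℝ)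

/-- The quotient matrix. -/
noncomputable def Bq (s a b : ℕ) : Matrix (Fin 3) (Fin 3) ℝ :=
  !![(s : ℝ) - 1, (a : ℝ), (b : ℝ); (s : ℝ), 0, 0; (s : ℝ), 0, (b : ℝ) - 1]

lemma fpol_factored (n k s a b : ℕ) (h1 : a + k = s + 1) (h2 : b + 2 * s + 1 = n + k)
    (x : ℝ) :
    fpol n k s x = (x - (s:ℝ) + 1) * x * (x - (b:ℝ) + 1)
      - (a:ℝ) * (s:ℝ) * (x - (b:ℝ) + 1) - (b:ℝ) * (s:ℝ) * x := by
  have haR : (a : ℝ) + k = (s : ℝ) + 1 := by exact_mod_cast congrArg (Nat.cast : ℕ → ℝ) h1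
  have hbR : (b : ℝ) + 2 * s + 1 = (n : ℝ) + k := by
    exact_mod_cast congrArg (Nat.cast : ℕ → ℝ) h2
  have ha' : (a : ℝ) = (s : ℝ) - k + 1 := by linarith
  have hb' : (b : ℝ) = (n : ℝ) + k - 2 * s - 1 := by linarith
  rw [fpol, ha', hb']; ring

lemma fpol_eq_det (n k s a b : ℕ) (h1 : a + k = s + 1) (h2 : b + 2 * s + 1 = n + k)
    (x : ℝ) :
    fpol n k s x = (x • (1 : Matrix (Fin 3) (Fin 3) ℝ) - Bq s a b).det := by
  rw [Matrix.det_fin_three, fpol_factored n k s a b h1 h2]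
  simp only [Bq, Matrix.sub_apply, Matrix.smul_apply, Matrix.one_apply, Matrix.cons_val',
    Matrix.cons_val_zero, Matrix.cons_val_one, Matrix.head_cons, Matrix.empty_val',
    Matrix.cons_val_fin_one, Matrix.head_fin_const, Matrix.cons_val_two, Matrix.tail_cons,
    Matrix.of_apply, smul_eq_mul, mul_one, mul_zero]
  norm_num [Fin.ext_iff]
  ring

lemma fpol_exists_root (n k s a b : ℕ) (h1 : a + k = s + 1) (h2 : b + 2 * s + 1 = n + k)
    (hs : 1 ≤ s) (hb : 1 ≤ b) :
    ∃ r : ℝ, 0 ≤ r ∧ fpol n k s r = 0 := by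
  have hfac := fpol_factored n k s a b h1 h2
  set c : ℝ := (b : ℝ) - 1 with hc
  have hc0 : 0 ≤ c := by
    have : (1 : ℝ) ≤ (b : ℝ) := by exact_mod_cast hb
    linarith
  have hs0 : (1:ℝ) ≤ (s:ℝ) := by exact_mod_cast hs
  have hb0 : (0:ℝ) ≤ (b:ℝ) := by positivity
  have hfc : fpol n k s c ≤ 0 := by
    have : fpol n k s c = -((b:ℝ) * (s:ℝ) * c) := by rw [hfac, hc]; ring
    rw [this]
    have : 0 ≤ (b:ℝ) * (s:ℝ) * c := by positivity
    linarith
  -- large value where fpol is positive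
  set C2 : ℝ := (n : ℝ) + k - s - 3
  set C1 : ℝ := (n : ℝ) + (s:ℝ)^2 - k*s + k - 2
  set C0 : ℝ := 2 * (s:ℝ)^3 - ((n:ℝ) + 3*k - 4)*(s:ℝ)^2 - ((n:ℝ) + 3*k - n*k - (k:ℝ)^2 - 2)*s
  have hfx : ∀ x : ℝ, fpol n k s x = x^3 - C2 * x^2 - C1 * x - C0 := by
    intro x; rw [fpol]; ring
  set M : ℝ := max c (1 + |C2| + |C1| + |C0|) with hM
  have hM1 : 1 + |C2| + |C1| + |C0| ≤ M := le_max_right _ _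
  have hMc : c ≤ M := le_max_left _ _
  have hMpos : 1 ≤ M := by
    have := abs_nonneg C2; have := abs_nonneg C1; have := abs_nonneg C0; linarith
  have hM0 : (0:ℝ) ≤ M := by linarith
  have hM2 : 1 ≤ M^2 := by nlinarith
  have hMM : M ≤ M^2 := by nlinarith
  have hfM : 0 ≤ fpol n k s M := by
    rw [hfx]
    have h2' : C2 * M^2 ≤ |C2| * M^2 := by
      have h := mul_le_mul_of_nonneg_right (le_abs_self C2) (by positivity : (0:ℝ) ≤ M^2)
      linarith
    have h1' : C1 * M ≤ |C1| * M^2 := by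
      have ha := mul_le_mul_of_nonneg_right (le_abs_self C1) hM0
      have hb' := mul_le_mul_of_nonneg_left hMM (abs_nonneg C1)
      linarith
    have h0' : C0 ≤ |C0| * M^2 := by
      have ha := le_abs_self C0
      have hb' := mul_le_mul_of_nonneg_left hM2 (abs_nonneg C0)
      linarith [mul_one |C0|]
    have hsum : (|C2| + |C1| + |C0|) * M^2 ≤ (M - 1) * M^2 := by nlinarith
    nlinarith
  have hcont : ContinuousOn (fpol n k s) (Set.Icc c M) := by
    apply Continuous.continuousOn
    have : fpol n k s = fun x : ℝ => x^3 - C2 * x^2 - C1 * x - C0 := funext hfx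
    rw [this]
    fun_prop
  have h0mem : (0 : ℝ) ∈ Set.Icc (fpol n k s c) (fpol n k s M) := ⟨hfc, hfM⟩
  obtain ⟨r, hr, hr0⟩ := intermediate_value_Icc hMc hcont h0mem
  exact ⟨r, le_trans hc0 hr.1, hr0⟩

end AuxLemmas


lemma Bq_mulVec (s a b : ℕ) (v : Fin 3 → ℝ) :
    (Bq s a b).mulVec v = ![((s:ℝ) - 1) * v 0 + (a:ℝ) * v 1 + (b:ℝ) * v 2,
      (s:ℝ) * v 0, (s:ℝ) * v 0 + ((b:ℝ) - 1) * v 2] := by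
  funext i
  fin_cases i <;>
    (simp [Bq, Matrix.mulVec, dotProduct, Fin.sum_univ_three]; try ring)

lemma sum_const_block {n : ℕ} (P : Fin n → Prop) [DecidablePred P] (w : Fin n → ℝ) (cst : ℝ)
    (hw : ∀ y, P y → w y = cst) :
    ∑ y ∈ Finset.univ.filter (fun y => P y), w y
      = ((Finset.univ.filter (fun y => P y)).card : ℝ) * cst := by
  rw [Finset.sum_congr rfl (fun y hy => hw y (Finset.mem_filter.mp hy).2),
    Finset.sum_const, nsmul_eq_mul]

/-- `ρ(K_s ∨ ((s-k+1) K_1 ∪ K_{n-2s+k-1}))` is the largest real root of `f_s`. -/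
theorem stmt_10 (s k n : ℕ) (hs : 1 ≤ s) (hk : k ≤ s) (hn : (2 * s : ℤ) - k + 2 ≤ n) :
    IsGreatest {x : ℝ | x ^ 3 - ((n : ℝ) + (k : ℝ) - (s : ℝ) - 3) * x ^ 2 - ((n : ℝ) + (s : ℝ) ^ 2 - (k : ℝ) * (s : ℝ) + (k : ℝ) - 2) * x - 2 * (s : ℝ) ^ 3 + ((n : ℝ) + 3 * (k : ℝ) - 4) * (s : ℝ) ^ 2 + ((n : ℝ) + 3 * (k : ℝ) - (n : ℝ) * (k : ℝ) - (k : ℝ) ^ 2 - 2) * (s : ℝ) = 0} (grho (Hgen n s (s - k + 1) 1)) := by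
  have hn' : 2 * s + 2 ≤ n + k := by omega
  set a := s - k + 1 with ha_def
  set b := n - (s + a) with hb_def
  have ha1 : 1 ≤ a := by omega
  have hb1 : 1 ≤ b := by omega
  have h1 : a + k = s + 1 := by omega
  have hsab : s + a + b = n := by omega
  have h2 : b + 2 * s + 1 = n + k := by omega
  have hsn : s ≤ n := by omega
  have hsan : s + a ≤ n := by omega
  have h0n : 0 < n := by omega
  have hsRn : s < n := by omega
  have hsaRn : s + a < n := by omega
  -- the target set is the root set of `fpol`
  have hset : {x : ℝ | x ^ 3 - ((n : ℝ) + (k : ℝ) - (s : ℝ) - 3) * x ^ 2 - ((n : ℝ) + (s : ℝ) ^ 2 - (k : ℝ) * (s : ℝ) + (k : ℝ) - 2) * x - 2 * (s : ℝ) ^ 3 + ((n : ℝ) + 3 * (k : ℝ) - 4) * (s : ℝ) ^ 2 + ((n : ℝ) + 3 * (k : ℝ) - (n : ℝ) * (k : ℝ) - (k : ℝ) ^ 2 - 2) * (s : ℝ) = 0}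
      = {x : ℝ | fpol n k s x = 0} := rfl
  rw [hset]
  -- every root of fpol is in the spectrum
  have hroot_mem : ∀ x : ℝ, fpol n k s x = 0 →
      x ∈ spectrum ℝ (adjMat (Hgen n s a 1)) := by
    intro x hx
    rw [fpol_eq_det n k s a b h1 h2 x] at hx
    obtain ⟨vec, hvne, hv⟩ := (Matrix.exists_mulVec_eq_zero_iff).mpr hx
    have hBv : (Bq s a b).mulVec vec = x • vec := by
      rw [Matrix.sub_mulVec, Matrix.smul_mulVec, Matrix.one_mulVec, sub_eq_zero] at hv
      exact hv.symm
    rw [Bq_mulVec] at hBv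
    have e0 : ((s:ℝ) - 1) * vec 0 + (a:ℝ) * vec 1 + (b:ℝ) * vec 2 = x * vec 0 := by
      have h := congrFun hBv 0; simpa using h
    have e1 : (s:ℝ) * vec 0 = x * vec 1 := by
      have h := congrFun hBv 1; simpa using h
    have e2 : (s:ℝ) * vec 0 + ((b:ℝ) - 1) * vec 2 = x * vec 2 := by
      have h := congrFun hBv 2; simpa using h
    set w : Fin n → ℝ := fun u =>
      if (u:ℕ) < s then vec 0 else if (u:ℕ) < s + a then vec 1 else vec 2 with hw_def
    have hwS : ∀ u : Fin n, (u:ℕ) < s → w u = vec 0 := fun u hu => if_pos hu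
    have hwI : ∀ u : Fin n, s ≤ (u:ℕ) → (u:ℕ) < s + a → w u = vec 1 := by
      intro u hu hu2
      rw [hw_def]; simp only [not_lt.mpr hu, if_false, if_neg (not_lt.mpr hu), if_pos hu2]
    have hwC : ∀ u : Fin n, s + a ≤ (u:ℕ) → w u = vec 2 := by
      intro u hu
      rw [hw_def]
      simp only [if_neg (not_lt.mpr (le_trans (Nat.le_add_right s a) hu)),
        if_neg (not_lt.mpr hu)]
    have hS : sumS s w = (s:ℝ) * vec 0 := by
      rw [sumS, sum_const_block _ w (vec 0) hwS, aux_card_filter_lt n s hsn]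
    have hI : sumI s (s + a) w = (a:ℝ) * vec 1 := by
      rw [sumI, sum_const_block _ w (vec 1) (fun y hy => hwI y hy.1 hy.2),
        aux_card_filter_mid n s (s + a) hsan]
      norm_num
    have hC : sumC (s + a) w = (b:ℝ) * vec 2 := by
      rw [sumC, sum_const_block _ w (vec 2) hwC, aux_card_filter_ge n (s + a)]
    have hT : ∑ y, w y = (s:ℝ) * vec 0 + (a:ℝ) * vec 1 + (b:ℝ) * vec 2 := by
      rw [aux_total s (s + a) (Nat.le_add_right s a) w, hS, hI, hC]
    have hAw : (adjMat (Hgen n s a 1)).mulVec w = x • w := by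
      funext u
      rcases lt_or_ge (u:ℕ) s with h | h
      · rw [aux_mulVec_S w u h, hT, Pi.smul_apply, smul_eq_mul, hwS u h]
        linarith
      rcases lt_or_ge (u:ℕ) (s + a) with h2 | h2
      · rw [aux_mulVec_I w u h h2, hS, Pi.smul_apply, smul_eq_mul, hwI u h h2]
        linarith
      · rw [aux_mulVec_C w u h2, hS, hC, Pi.smul_apply, smul_eq_mul, hwC u h2]
        linarith
    have hwne : w ≠ 0 := by
      intro hw0
      apply hvne
      funext i
      have w0 : ∀ u : Fin n, w u = 0 := fun u => congrFun hw0 u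
      fin_cases i
      · have := w0 ⟨0, h0n⟩
        rwa [hwS ⟨0, h0n⟩ (by simp; omega)] at this
      · have := w0 ⟨s, hsRn⟩
        rwa [hwI ⟨s, hsRn⟩ (by simp) (by simp; omega)] at this
      · have := w0 ⟨s + a, hsaRn⟩
        rwa [hwC ⟨s + a, hsaRn⟩ (by simp)] at this
    exact (aux_mem_spectrum_iff _ x).mpr ⟨w, hwne, hAw⟩
  -- a nonnegative root exists
  obtain ⟨r, hr0, hrroot⟩ := fpol_exists_root n k s a b h1 h2 hs hb1
  have hfin : (spectrum ℝ (adjMat (Hgen n s a 1))).Finite := Matrix.finite_spectrum _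
  have hrmem := hroot_mem r hrroot
  have hnemp : (spectrum ℝ (adjMat (Hgen n s a 1))).Nonempty := ⟨r, hrmem⟩
  have hbdd : BddAbove (spectrum ℝ (adjMat (Hgen n s a 1))) := hfin.bddAbove
  have hsupmem : sSup (spectrum ℝ (adjMat (Hgen n s a 1)))
      ∈ spectrum ℝ (adjMat (Hgen n s a 1)) := hnemp.csSup_mem hfin
  have hgrho : grho (Hgen n s a 1) = sSup (spectrum ℝ (adjMat (Hgen n s a 1))) := rfl
  set ρ := sSup (spectrum ℝ (adjMat (Hgen n s a 1))) with hρ_def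
  have hρr : r ≤ ρ := le_csSup hbdd hrmem
  have hρ0 : (0:ℝ) ≤ ρ := le_trans hr0 hρr
  have hroot : fpol n k s ρ = 0 := by
    by_cases hρz : ρ = 0
    · have hre : r = 0 := le_antisymm (hρz ▸ hρr) hr0
      have h' := hrroot
      rw [hre] at h'
      rwa [hρz]
    have hρpos : (0:ℝ) < ρ := lt_of_le_of_ne hρ0 (Ne.symm hρz)
    have hρ1 : ρ + 1 ≠ 0 := by linarith
    obtain ⟨w, hwne, hAw⟩ := (aux_mem_spectrum_iff _ ρ).mp hsupmem
    have hSv : ∀ u : Fin n, (u:ℕ) < s → (ρ + 1) * w u = ∑ y, w y := by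
      intro u hu
      have h := congrFun hAw u
      rw [aux_mulVec_S w u hu, Pi.smul_apply, smul_eq_mul] at h
      linarith
    have hIv : ∀ u : Fin n, s ≤ (u:ℕ) → (u:ℕ) < s + a → ρ * w u = sumS s w := by
      intro u hu hu2
      have h := congrFun hAw u
      rw [aux_mulVec_I w u hu hu2, Pi.smul_apply, smul_eq_mul] at h
      linarith
    have hCv : ∀ u : Fin n, s + a ≤ (u:ℕ) →
        (ρ + 1) * w u = sumS s w + sumC (s + a) w := by
      intro u hu
      have h := congrFun hAw u
      rw [aux_mulVec_C w u hu, Pi.smul_apply, smul_eq_mul] at h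
      linarith
    set p : ℝ := (∑ y, w y) / (ρ + 1) with hp_def
    set q : ℝ := sumS s w / ρ with hq_def
    set t : ℝ := (sumS s w + sumC (s + a) w) / (ρ + 1) with ht_def
    have hwS : ∀ u : Fin n, (u:ℕ) < s → w u = p := by
      intro u hu
      rw [hp_def, eq_div_iff hρ1]
      linarith [hSv u hu]
    have hwI : ∀ u : Fin n, s ≤ (u:ℕ) → (u:ℕ) < s + a → w u = q := by
      intro u hu hu2
      rw [hq_def, eq_div_iff hρz]
      linarith [hIv u hu hu2]
    have hwC : ∀ u : Fin n, s + a ≤ (u:ℕ) → w u = t := by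
      intro u hu
      rw [ht_def, eq_div_iff hρ1]
      linarith [hCv u hu]
    have hS : sumS s w = (s:ℝ) * p := by
      rw [sumS, sum_const_block _ w p hwS, aux_card_filter_lt n s hsn]
    have hI : sumI s (s + a) w = (a:ℝ) * q := by
      rw [sumI, sum_const_block _ w q (fun y hy => hwI y hy.1 hy.2),
        aux_card_filter_mid n s (s + a) hsan]
      norm_num
    have hC : sumC (s + a) w = (b:ℝ) * t := by
      rw [sumC, sum_const_block _ w t hwC, aux_card_filter_ge n (s + a)]
    have hT : ∑ y, w y = (s:ℝ) * p + (a:ℝ) * q + (b:ℝ) * t := by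
      rw [aux_total s (s + a) (Nat.le_add_right s a) w, hS, hI, hC]
    have e0 : (ρ + 1) * p = (s:ℝ) * p + (a:ℝ) * q + (b:ℝ) * t := by
      have h := hSv ⟨0, h0n⟩ (by simp; omega)
      rw [hwS ⟨0, h0n⟩ (by simp; omega), hT] at h
      exact h
    have e1 : ρ * q = (s:ℝ) * p := by
      have h := hIv ⟨s, hsRn⟩ (by simp) (by simp; omega)
      rw [hwI ⟨s, hsRn⟩ (by simp) (by simp; omega), hS] at h
      exact h
    have e2 : (ρ + 1) * t = (s:ℝ) * p + (b:ℝ) * t := by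
      have h := hCv ⟨s + a, hsaRn⟩ (by simp)
      rw [hwC ⟨s + a, hsaRn⟩ (by simp), hS, hC] at h
      exact h
    have hneq : ¬(p = 0 ∧ q = 0 ∧ t = 0) := by
      rintro ⟨hp0, hq0, ht0⟩
      apply hwne
      funext u
      rcases lt_or_ge (u:ℕ) s with h | h
      · rw [hwS u h, hp0]; rfl
      rcases lt_or_ge (u:ℕ) (s + a) with h2 | h2
      · rw [hwI u h h2, hq0]; rfl
      · rw [hwC u h2, ht0]; rfl
    have hdet : ((ρ • 1 : Matrix (Fin 3) (Fin 3) ℝ) - Bq s a b).det = 0 := by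
      rw [← Matrix.exists_mulVec_eq_zero_iff]
      refine ⟨![p, q, t], ?_, ?_⟩
      · intro h
        apply hneq
        refine ⟨?_, ?_, ?_⟩
        · have := congrFun h 0; simpa using this
        · have := congrFun h 1; simpa using this
        · have := congrFun h 2; simpa using this
      · rw [Matrix.sub_mulVec, Matrix.smul_mulVec, Matrix.one_mulVec, Bq_mulVec]
        funext i
        fin_cases i <;> simp <;> linarith
    rw [fpol_eq_det n k s a b h1 h2]
    exact hdet
  constructor
  · exact hroot
  · intro x hx
    exact le_csSup hbdd (hroot_mem x hx)
end

section
/- Let δ, s, k, n be integers with δ ≥ 1, 0 ≤ k < δ, n ≥ 9δ−2k+12, and δ+1 ≤ s ≤ (n+k−2)/2. Define, for an integer parameter m ≥ 1, g_m(x) = x³ − (3n+2k−m−6)x² + (2n² + mn + 2kn − 8n − 4m² + 4(k−1)m − 4k + 8)x − 2m³ + (4n+4k−10)m² − (2n² + 4kn − 10n + 2k² − 10k + 12)m. Then g_s(x) > g_δ(x) for every real number x ≥ 2n−2δ+2k−4. -/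
set_option maxHeartbeats 1600000 in
/-- The key polynomial inequality in the proof of Lemma 3.4: `g_δ(x) < g_s(x)` for
`x ≥ 2n - 2δ + 2k - 4`. -/
theorem stmt_16 (δ s k n : ℤ) (hδ : 1 ≤ δ) (hk0 : 0 ≤ k) (hk : k < δ)
    (hn : 9 * δ - 2 * k + 12 ≤ n) (hs1 : δ + 1 ≤ s) (hs2 : 2 * s ≤ n + k - 2) :
    ∀ x : ℝ, 2 * (n : ℝ) - 2 * (δ : ℝ) + 2 * (k : ℝ) - 4 ≤ x →
      x ^ 3 - (3 * (n : ℝ) + 2 * (k : ℝ) - (δ : ℝ) - 6) * x ^ 2 + (2 * (n : ℝ) ^ 2 + (δ : ℝ) * (n : ℝ) + 2 * (k : ℝ) * (n : ℝ) - 8 * (n : ℝ) - 4 * (δ : ℝ) ^ 2 + 4 * ((k : ℝ) - 1) * (δ : ℝ) - 4 * (k : ℝ) + 8) * x - 2 * (δ : ℝ) ^ 3 + (4 * (n : ℝ) + 4 * (k : ℝ) - 10) * (δ : ℝ) ^ 2 - (2 * (n : ℝ) ^ 2 + 4 * (k : ℝ) * (n : ℝ) - 10 * (n : ℝ) + 2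 * (k : ℝ) ^ 2 - 10 * (k : ℝ) + 12) * (δ : ℝ)
      < x ^ 3 - (3 * (n : ℝ) + 2 * (k : ℝ) - (s : ℝ) - 6) * x ^ 2 + (2 * (n : ℝ) ^ 2 + (s : ℝ) * (n : ℝ) + 2 * (k : ℝ) * (n : ℝ) - 8 * (n : ℝ) - 4 * (s : ℝ) ^ 2 + 4 * ((k : ℝ) - 1) * (s : ℝ) - 4 * (k : ℝ) + 8) * x - 2 * (s : ℝ) ^ 3 + (4 * (n : ℝ) + 4 * (k : ℝ) - 10) * (s : ℝ) ^ 2 - (2 * (n : ℝ) ^ 2 + 4 * (k : ℝ) * (n : ℝ) - 10 * (n : ℝ) + 2 * (k : ℝ) ^ 2 - 10 * (k : ℝ) + 12) * (s : ℝ) := by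
  intro x hx
  have hδ' : (1 : ℝ) ≤ (δ : ℝ) := by exact_mod_cast hδ
  have hk0' : (0 : ℝ) ≤ (k : ℝ) := by exact_mod_cast hk0
  have hk' : (k : ℝ) + 1 ≤ (δ : ℝ) := by exact_mod_cast hk
  have hn' : 9 * (δ : ℝ) - 2 * (k : ℝ) + 12 ≤ (n : ℝ) := by exact_mod_cast hn
  have hs1' : (δ : ℝ) + 1 ≤ (s : ℝ) := by exact_mod_cast hs1
  have hs2' : 2 * (s : ℝ) ≤ (n : ℝ) + (k : ℝ) - 2 := by exact_mod_cast hs2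
  set N := (n : ℝ); set D := (δ : ℝ); set K := (k : ℝ); set S := (s : ℝ)
  set x0 : ℝ := 2 * N - 2 * D + 2 * K - 4 with hx0def
  set B : ℝ := N - 4 * (S + D) + 4 * K - 4 with hBdef
  set C : ℝ := -2 * (S ^ 2 + S * D + D ^ 2) + (4 * N + 4 * K - 10) * (S + D)
      - (2 * N ^ 2 + 4 * K * N - 10 * N + 2 * K ^ 2 - 10 * K + 12) with hCdef
  -- h(x0) > 0
  have hx0pos : 0 < x0 ^ 2 + B * x0 + C := by
    have hA : (0:ℝ) ≤ N + K - 2 - 2 * S := by linarith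
    have hE : (0:ℝ) ≤ S - D - 1 := by linarith
    have hb : (0:ℝ) ≤ N - 9 * D + 2 * K - 12 := by linarith
    have hD0 : (0:ℝ) ≤ D := by linarith
    nlinarith [mul_nonneg hA hE,
      mul_nonneg hA (by linarith : (0:ℝ) ≤ 5 * N + 5 * K - 4 * D - 6),
      mul_nonneg hb hb, mul_nonneg hb hD0, mul_nonneg hb hk0',
      mul_nonneg hk0' (by linarith : (0:ℝ) ≤ D - 1 - K),
      mul_nonneg hD0 hD0, mul_nonneg hD0 hk0']
  -- slope positivity
  have hslope : 0 < x + x0 + B := by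
    have h1 : 0 < 2 * x0 + B := by
      simp only [hx0def, hBdef]; nlinarith
    linarith
  have hxx0 : 0 ≤ x - x0 := by linarith
  have hhx : 0 < x ^ 2 + B * x + C := by
    nlinarith [mul_nonneg hxx0 hslope.le]
  have hts : 0 < S - D := by linarith
  have hprod := mul_pos hts hhx
  have hexp : (S - D) * (x ^ 2 + B * x + C) =
      (x ^ 3 - (3 * N + 2 * K - S - 6) * x ^ 2 +
          (2 * N ^ 2 + S * N + 2 * K * N - 8 * N - 4 * S ^ 2 + 4 * (K - 1) * S - 4 * K + 8) * x -
          2 * S ^ 3 + (4 * N + 4 * K - 10) * S ^ 2 -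
          (2 * N ^ 2 + 4 * K * N - 10 * N + 2 * K ^ 2 - 10 * K + 12) * S) -
      (x ^ 3 - (3 * N + 2 * K - D - 6) * x ^ 2 +
          (2 * N ^ 2 + D * N + 2 * K * N - 8 * N - 4 * D ^ 2 + 4 * (K - 1) * D - 4 * K + 8) * x -
          2 * D ^ 3 + (4 * N + 4 * K - 10) * D ^ 2 -
          (2 * N ^ 2 + 4 * K * N - 10 * N + 2 * K ^ 2 - 10 * K + 12) * D) := by
    simp only [hBdef, hCdef]; ring
  linarith [hexp ▸ hprod]
end
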